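/- Let A = (A_1, …, A_m) be a POVM on ℂ^d with all elements nonzero. Then γ(A) = d if and only if there exist an orthonormal basis e_1, …, e_d of ℂ^d, a function f : {1, …, m} → {1, …, d}, and positive reals c_1, …, c_m such that A_j = c_j · e_{f(j)} e_{f(j)}ᴴ for every j (i.e., A is equivalent to a rank-1 PVM). -/

import Mathlib

open Matrix
open scoped ComplexOrder

def IsPOVM {d m : ℕ} (A : Fin m → Matrix (Fin d) (Fin d) ℂ) : Prop :=
  (∀ j, (A j).PosSemidef) ∧ ∑ j, A j = 1

/-- Transition graph of a POVM: distinct `j, k` adjacent iff `tr(A_j A_k) ≠ 0`. -/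
def transitionGraph {d m : ℕ} (A : Fin m → Matrix (Fin d) (Fin d) ℂ) :
    SimpleGraph (Fin m) where
  Adj j k := j ≠ k ∧ (A j * A k).trace ≠ 0
  symm := by
    constructor
    intro j k h
    exact ⟨h.1.symm, by rw [Matrix.trace_mul_comm]; exact h.2⟩
  loopless := by constructor; intro j h; exact h.1 rfl

/-- Number of connected components of the transition graph. -/
noncomputable def gammaPOVM {d m : ℕ} (A : Fin m → Matrix (Fin d) (Fin d) ℂ) : ℕ :=
  Nat.card (transitionGraph A).ConnectedComponent

set_option linter.unusedTactic false

section Helpers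
variable {d : ℕ}

lemma aux_trace_conjTranspose_mul_self_eq_zero {n m : ℕ} {M : Matrix (Fin n) (Fin m) ℂ}
    (h : (Mᴴ * M).trace = 0) : M = 0 := by
  have h' : ∀ j ∈ Finset.univ, (Mᴴ * M) j j = 0 := by
    rw [Matrix.trace] at h
    refine (Finset.sum_eq_zero_iff_of_nonneg ?_).mp h
    · intro j _
      simp only [Matrix.mul_apply, Matrix.conjTranspose_apply]
      exact Finset.sum_nonneg fun i _ => star_mul_self_nonneg _
  ext i j
  have := h' j (Finset.mem_univ j)
  simp only [Matrix.mul_apply, Matrix.conjTranspose_apply] at this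
  have h2 : ∀ i ∈ Finset.univ, star (M i j) * M i j = 0 := by
    refine (Finset.sum_eq_zero_iff_of_nonneg ?_).mp this
    intro i _; exact star_mul_self_nonneg _
  have h3 := h2 i (Finset.mem_univ i)
  rcases mul_eq_zero.mp h3 with h4 | h4
  · simpa using congrArg star h4
  · simpa using h4

open scoped MatrixOrder in
lemma psd_mul_eq_zero {n : ℕ} {M N : Matrix (Fin n) (Fin n) ℂ}
    (hM : M.PosSemidef) (hN : N.PosSemidef) (h : (M * N).trace = 0) : M * N = 0 := by
  have hMs := (CFC.sqrt_nonneg M).posSemidef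
  have hNs := (CFC.sqrt_nonneg N).posSemidef
  set S := CFC.sqrt M with hS
  set T := CFC.sqrt N with hT
  have hSS : S * S = M := CFC.sqrt_mul_sqrt_self M hM.nonneg
  have hTT : T * T = N := CFC.sqrt_mul_sqrt_self N hN.nonneg
  have key : S * T = 0 := by
    apply aux_trace_conjTranspose_mul_self_eq_zero
    have : (S * T)ᴴ = T * S := by rw [Matrix.conjTranspose_mul, hMs.1, hNs.1]
    rw [this]
    calc (T * S * (S * T)).trace = (S * S * (T * T)).trace := by
          rw [← Matrix.mul_assoc, Matrix.trace_mul_comm (T * S * S) T,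
            Matrix.mul_assoc, Matrix.mul_assoc, ← Matrix.mul_assoc T T,
            Matrix.trace_mul_comm, Matrix.mul_assoc]
      _ = 0 := by rw [hSS, hTT, h]
  calc M * N = S * (S * T) * T := by rw [← hSS, ← hTT]; noncomm_ring
    _ = 0 := by rw [key, Matrix.mul_zero, Matrix.zero_mul]

lemma gram_complete (e : Fin d → Fin d → ℂ)
    (he : ∀ i i', ∑ x, star (e i x) * e i' x = if i = i' then 1 else 0) :
    ∑ i, Matrix.vecMulVec (e i) (fun b => star (e i b)) = 1 := by
  set U : Matrix (Fin d) (Fin d) ℂ := Matrix.of (fun x i => e i x) with hU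
  have h1 : Uᴴ * U = 1 := by
    ext i i'
    simp only [Matrix.mul_apply, Matrix.conjTranspose_apply, hU, Matrix.of_apply,
      Matrix.one_apply]
    exact he i i'
  have h2 : U * Uᴴ = 1 := mul_eq_one_comm.mp h1
  ext x y
  have := congrFun (congrFun h2 x) y
  simp only [Matrix.mul_apply, Matrix.conjTranspose_apply, hU, Matrix.of_apply] at this
  simp only [Finset.sum_apply, Matrix.sum_apply, Matrix.vecMulVec_apply]
  rw [← this]

lemma hlp_mul_vecMulVec (M : Matrix (Fin d) (Fin d) ℂ) (u v : Fin d → ℂ) :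
    M * vecMulVec u v = vecMulVec (M *ᵥ u) v := by
  ext a b
  simp only [Matrix.mul_apply, vecMulVec_apply, Matrix.mulVec, dotProduct, Finset.sum_mul]
  exact Finset.sum_congr rfl fun y _ => by ring

lemma hlp_vecMulVec_mul (M : Matrix (Fin d) (Fin d) ℂ) (u v : Fin d → ℂ) :
    vecMulVec u v * M = vecMulVec u (v ᵥ* M) := by
  ext a b
  simp only [Matrix.mul_apply, vecMulVec_apply, Matrix.vecMul, dotProduct, Finset.mul_sum]
  exact Finset.sum_congr rfl fun y _ => by ring

lemma hlp_vecMulVec_mul_vecMulVec (u v w x : Fin d → ℂ) :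
    vecMulVec u v * vecMulVec w x = (v ⬝ᵥ w) • vecMulVec u x := by
  ext a b
  simp only [Matrix.mul_apply, vecMulVec_apply, Matrix.smul_apply, dotProduct,
    smul_eq_mul, Finset.sum_mul]
  exact Finset.sum_congr rfl fun y _ => by ring

lemma hlp_trace_vecMulVec (u v : Fin d → ℂ) :
    (vecMulVec u v).trace = u ⬝ᵥ v := by
  simp [Matrix.trace, Matrix.diag, vecMulVec_apply, dotProduct]

lemma hlp_conjTranspose_vecMulVec (u : Fin d → ℂ) :
    (vecMulVec u (fun b => star (u b)))ᴴ = vecMulVec u (fun b => star (u b)) := by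
  ext a b
  simp [vecMulVec_apply, conjTranspose_apply, mul_comm]

lemma hlp_exists_mulVec_ne_zero {M : Matrix (Fin d) (Fin d) ℂ} (h : M ≠ 0) :
    ∃ w, M *ᵥ w ≠ 0 := by
  by_contra hc
  push_neg at hc
  apply h
  ext a b
  have := congrFun (hc (Pi.single b 1)) a
  simpa [Matrix.mulVec, dotProduct, Pi.single_apply] using this

end Helpers

lemma forward_dir {d m : ℕ}
    (A : Fin m → Matrix (Fin d) (Fin d) ℂ)
    (hA : IsPOVM A) (hA0 : ∀ j, A j ≠ 0) (hγ : gammaPOVM A = d) :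
    ∃ (e : Fin d → Fin d → ℂ) (f : Fin m → Fin d) (c : Fin m → ℝ),
      (∀ i i', ∑ x, star (e i x) * e i' x = if i = i' then 1 else 0) ∧
      (∀ j, 0 < c j) ∧
      (∀ j, A j = (c j : ℂ) •
        Matrix.vecMulVec (e (f j)) (fun b => star (e (f j) b))) := by
  classical
  set G := transitionGraph A with hGdef
  have hzero : ∀ j k : Fin m,
      G.connectedComponentMk j ≠ G.connectedComponentMk k → A j * A k = 0 := by
    intro j k hne
    have hjk : j ≠ k := fun h => hne (by rw [h])
    have hnadj : ¬ G.Adj j k := fun h =>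
      hne (SimpleGraph.ConnectedComponent.connectedComponentMk_eq_of_adj h)
    have htr : (A j * A k).trace = 0 := by
      by_contra h; exact hnadj ⟨hjk, h⟩
    exact psd_mul_eq_zero (hA.1 j) (hA.1 k) htr
  haveI : Finite G.ConnectedComponent := Quot.finite _
  let φ : G.ConnectedComponent ≃ Fin d := Finite.equivFinOfCardEq hγ
  -- representatives
  let rep : G.ConnectedComponent → Fin m := fun c => c.exists_rep.choose
  have hrep : ∀ c, G.connectedComponentMk (rep c) = c := fun c => c.exists_rep.choose_spec
  -- nonzero vectors
  have hw : ∀ c, ∃ w, A (rep c) *ᵥ w ≠ 0 := fun c => hlp_exists_mulVec_ne_zero (hA0 _)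
  let u : G.ConnectedComponent → Fin d → ℂ := fun c => A (rep c) *ᵥ (hw c).choose
  have hu : ∀ c, u c ≠ 0 := fun c => (hw c).choose_spec
  have hkill : ∀ (j : Fin m) (c : G.ConnectedComponent),
      G.connectedComponentMk j ≠ c → A j *ᵥ u c = 0 := by
    intro j c hne
    have h0 : A j * A (rep c) = 0 := hzero j (rep c) (by rw [hrep c]; exact hne)
    show A j *ᵥ (A (rep c) *ᵥ _) = 0
    rw [Matrix.mulVec_mulVec, h0, Matrix.zero_mulVec]
  have hinner : ∀ c c', c ≠ c' → star (u c) ⬝ᵥ u c' = 0 := by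
    intro c c' hne
    show star (A (rep c) *ᵥ _) ⬝ᵥ u c' = 0
    rw [Matrix.star_mulVec, ← Matrix.dotProduct_mulVec, (hA.1 (rep c)).1,
      hkill (rep c) c' (by rw [hrep c]; exact hne)]
    simp [dotProduct]
  -- normalization
  let s : G.ConnectedComponent → ℝ := fun c => ∑ x, Complex.normSq (u c x)
  have hs : ∀ c, 0 < s c := by
    intro c
    obtain ⟨x, hx⟩ := Function.ne_iff.mp (hu c)
    refine Finset.sum_pos' (fun y _ => Complex.normSq_nonneg _) ⟨x, Finset.mem_univ x, ?_⟩
    exact Complex.normSq_pos.mpr hx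
  have hsum : ∀ c, ∑ x, star (u c x) * u c x = (s c : ℂ) := by
    intro c
    simp only [s]
    push_cast
    refine Finset.sum_congr rfl fun x _ => ?_
    rw [Complex.normSq_eq_conj_mul_self]
    rfl
  let r : G.ConnectedComponent → ℝ := fun c => (Real.sqrt (s c))⁻¹
  have hr : ∀ c, (r c) * (r c) * s c = 1 := by
    intro c
    have hx : Real.sqrt (s c) ≠ 0 := (Real.sqrt_pos.mpr (hs c)).ne'
    rw [show s c = Real.sqrt (s c) * Real.sqrt (s c) from (Real.mul_self_sqrt (hs c).le).symm]
    field_simp [r]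
    rw [← mul_pow, show r c * √(s c) = 1 from inv_mul_cancel₀ hx, one_pow]
  let E : G.ConnectedComponent → Fin d → ℂ := fun c x => (r c : ℂ) * u c x
  set e : Fin d → Fin d → ℂ := fun i => E (φ.symm i) with hedef
  set f : Fin m → Fin d := fun j => φ (G.connectedComponentMk j) with hfdef
  -- orthonormality
  have he : ∀ i i', ∑ x, star (e i x) * e i' x = if i = i' then 1 else 0 := by
    intro i i'
    by_cases hii : i = i'
    · subst hii
      rw [if_pos rfl]
      set c := φ.symm i
      have h1 : ∀ x, star (e i x) * e i x
          = (r c : ℂ) * (r c : ℂ) * (star (u c x) * u c x) := by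
        intro x
        simp only [e, E, star_mul', Complex.star_def, Complex.conj_ofReal]
        ring
      rw [Finset.sum_congr rfl fun x _ => h1 x, ← Finset.mul_sum, hsum]
      push_cast
      exact_mod_cast congrArg (Complex.ofReal) (hr c)
    · rw [if_neg hii]
      set c := φ.symm i
      set c' := φ.symm i'
      have hcc : c ≠ c' := fun h => hii (by
        have := congrArg φ h
        simpa [c, c', Equiv.apply_symm_apply] using this)
      have h1 : ∀ x, star (e i x) * e i' x
          = (r c : ℂ) * (r c' : ℂ) * (star (u c x) * u c' x) := by
        intro x
        simp only [e, E, star_mul', Complex.star_def, Complex.conj_ofReal]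
        ring
      rw [Finset.sum_congr rfl fun x _ => h1 x, ← Finset.mul_sum]
      have : ∑ x, star (u c x) * u c' x = 0 := hinner c c' hcc
      rw [this, mul_zero]
  -- main equation
  have key : ∀ j, ∃ q : ℝ, 0 < q ∧ A j = (q : ℂ) •
      Matrix.vecMulVec (e (f j)) (fun b => star (e (f j) b)) := by
    intro j
    have hsymm : φ.symm (f j) = G.connectedComponentMk j := by
      simp [hfdef, Equiv.symm_apply_apply]
    -- A j kills e i for i ≠ f j
    have hkill' : ∀ i, i ≠ f j → A j *ᵥ e i = 0 := by
      intro i hi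
      have hcne : G.connectedComponentMk j ≠ φ.symm i := by
        intro h
        apply hi
        have h2 := congrArg φ h
        rw [Equiv.apply_symm_apply] at h2
        simpa [hfdef] using h2.symm
      have h0 : A j *ᵥ u (φ.symm i) = 0 := hkill j _ hcne
      have : e i = (r (φ.symm i) : ℂ) • u (φ.symm i) := rfl
      rw [this, Matrix.mulVec_smul, h0, smul_zero]
    set ee := e (f j) with heedef
    set P : Matrix (Fin d) (Fin d) ℂ := Matrix.vecMulVec ee (fun b => star (ee b)) with hPdef
    have hA1 : A j = A j * P := by
      conv_lhs => rw [← Matrix.mul_one (A j), ← gram_complete e he]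
      rw [Finset.mul_sum]
      rw [Finset.sum_eq_single (f j)]
      · intro i _ hi
        rw [hlp_mul_vecMulVec, hkill' i hi]
        ext a b
        simp [vecMulVec_apply]
      · intro h
        exact absurd (Finset.mem_univ _) h
    have hA2 : A j = P * A j := by
      have := congrArg Matrix.conjTranspose hA1
      rwa [Matrix.conjTranspose_mul, (hA.1 j).1, hPdef, hlp_conjTranspose_vecMulVec] at this
    have hA3 : A j = (((fun b => star (ee b)) ᵥ* A j) ⬝ᵥ ee) • P := by
      calc A j = P * A j * P := by rw [← hA2, ← hA1]
        _ = _ := by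
          rw [hPdef, hlp_vecMulVec_mul, hlp_vecMulVec_mul_vecMulVec]
    set q : ℂ := ((fun b => star (ee b)) ᵥ* A j) ⬝ᵥ ee with hqdef
    have hq1 : q = star ee ⬝ᵥ (A j *ᵥ ee) := by
      rw [hqdef, ← Matrix.dotProduct_mulVec]
      rfl
    have hq2 : 0 ≤ q := by
      rw [hq1]
      exact (hA.1 j).dotProduct_mulVec_nonneg ee
    obtain ⟨hre, him⟩ := Complex.nonneg_iff.mp hq2
    have hqre : q = (q.re : ℂ) := by
      apply Complex.ext <;> simp [← him]
    have hqne : q.re ≠ 0 := by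
      intro h0
      apply hA0 j
      rw [hA3, hqre, h0]
      simp
    refine ⟨q.re, lt_of_le_of_ne hre (Ne.symm hqne), ?_⟩
    rw [hA3, hqre]
    simp
  exact ⟨e, f, fun j => (key j).choose, he, fun j => (key j).choose_spec.1,
    fun j => (key j).choose_spec.2⟩


lemma reverse_dir {d m : ℕ}
    (A : Fin m → Matrix (Fin d) (Fin d) ℂ) (hA : IsPOVM A)
    (e : Fin d → Fin d → ℂ) (f : Fin m → Fin d) (c : Fin m → ℝ)
    (he : ∀ i i', ∑ x, star (e i x) * e i' x = if i = i' then 1 else 0)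
    (hc : ∀ j, 0 < c j)
    (hAe : ∀ j, A j = (c j : ℂ) •
      Matrix.vecMulVec (e (f j)) (fun b => star (e (f j) b))) :
    gammaPOVM A = d := by
  have hdot : ∀ i i', (fun b => star (e i b)) ⬝ᵥ e i' = if i = i' then 1 else 0 := by
    intro i i'; rw [← he i i']; rfl
  have hdot' : ∀ i i', e i ⬝ᵥ (fun b => star (e i' b)) = if i' = i then 1 else 0 := by
    intro i i'; rw [← he i' i]
    simp [dotProduct, mul_comm]
  -- trace formula
  have htr : ∀ j k, (A j * A k).trace =
      (c j : ℂ) * (c k : ℂ) * (if f j = f k then 1 else 0) := by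
    intro j k
    rw [hAe j, hAe k, Matrix.smul_mul, Matrix.mul_smul,
      hlp_vecMulVec_mul_vecMulVec, Matrix.trace_smul, Matrix.trace_smul,
      Matrix.trace_smul, hlp_trace_vecMulVec, hdot, hdot']
    by_cases hfe : f j = f k
    · simp [hfe, smul_eq_mul, mul_assoc]
    · simp [hfe, Ne.symm hfe]
  -- adjacency characterization
  have hadj : ∀ j k, (transitionGraph A).Adj j k ↔ j ≠ k ∧ f j = f k := by
    intro j k
    constructor
    · rintro ⟨hne, htr0⟩
      refine ⟨hne, ?_⟩
      by_contra hf
      rw [htr j k, if_neg hf, mul_zero] at htr0; exact htr0 rfl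
    · rintro ⟨hne, hf⟩
      refine ⟨hne, ?_⟩
      rw [htr j k, if_pos hf, mul_one]
      exact mul_ne_zero (by exact_mod_cast (hc j).ne')
        (by exact_mod_cast (hc k).ne')
  -- f surjective
  have hsurj : Function.Surjective f := by
    intro i
    by_contra hns
    push_neg at hns
    have h1 : ((∑ j, A j) * vecMulVec (e i) (fun b => star (e i b))).trace = 1 := by
      rw [hA.2, one_mul, hlp_trace_vecMulVec, hdot']
      simp
    rw [Finset.sum_mul, Matrix.trace_sum] at h1
    have h2 : ∀ j ∈ Finset.univ, (A j * vecMulVec (e i) (fun b => star (e i b))).trace = 0 := by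
      intro j _
      rw [hAe j, Matrix.smul_mul, hlp_vecMulVec_mul_vecMulVec, Matrix.trace_smul,
        Matrix.trace_smul, hdot]
      rw [if_neg (hns j)]
      simp
    rw [Finset.sum_eq_zero h2] at h1
    exact zero_ne_one h1
  -- count components
  set G := transitionGraph A with hG
  have hconst : ∀ (v w : Fin m) (p : G.Walk v w), p.IsPath → f v = f w := by
    intro v w p hp
    clear hp
    induction p with
    | nil => rfl
    | cons ha _ ih => exact (((hadj _ _).mp ha).2).trans ih
  let F : G.ConnectedComponent → Fin d := SimpleGraph.ConnectedComponent.lift f hconst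
  have hFbij : Function.Bijective F := by
    constructor
    · intro c1 c2
      refine SimpleGraph.ConnectedComponent.ind₂
        (β := fun c1 c2 => F c1 = F c2 → c1 = c2) (fun v w h => ?_) c1 c2
      simp only [F, SimpleGraph.ConnectedComponent.lift_mk] at h
      by_cases hvw : v = w
      · rw [hvw]
      · exact SimpleGraph.ConnectedComponent.connectedComponentMk_eq_of_adj
          ((hadj v w).mpr ⟨hvw, h⟩)
    · intro i
      obtain ⟨j, hj⟩ := hsurj i
      exact ⟨G.connectedComponentMk j, hj⟩
  have := Nat.card_eq_of_bijective F hFbij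
  simpa [gammaPOVM, ← hG] using this


/-- `γ(A) = d` iff `A` is equivalent to a rank-1 PVM, i.e. each `A_j` is a positive
multiple of a rank-one projector `e_{f(j)} e_{f(j)}ᴴ` built from an orthonormal
basis `e_1, …, e_d` of `ℂ^d`. -/
theorem stmt_2 {d m : ℕ}
    (A : Fin m → Matrix (Fin d) (Fin d) ℂ)
    (hA : IsPOVM A) (hA0 : ∀ j, A j ≠ 0) :
    gammaPOVM A = d ↔
      ∃ (e : Fin d → Fin d → ℂ) (f : Fin m → Fin d) (c : Fin m → ℝ),
        (∀ i i', ∑ x, star (e i x) * e i' x = if i = i' then 1 else 0) ∧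
        (∀ j, 0 < c j) ∧
        (∀ j, A j = (c j : ℂ) •
          Matrix.vecMulVec (e (f j)) (fun b => star (e (f j) b))) := by
  constructor
  · exact forward_dir A hA hA0
  · rintro ⟨e, f, c, he, hc, hAe⟩
    exact reverse_dir A hA e f c he hc hAe
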